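/- Let F(x,q) = Σ_{n≥0} (Σ_{π ∈ NC_n} q^{occ_{122}(π)}) x^n be the formal power series in x with coefficients polynomials in q recording the distribution of the subword 122 on non-crossing partitions. Then F satisfies the algebraic equation x(1+(q−1)x)F² = (1+(q−1)x²)F − 1. -/

import Mathlib

/-- `l` is a restricted growth sequence (canonical sequential form of a set
partition): it starts with 1, all letters are ≥ 1, and each letter is at most
one more than the maximum of the preceding prefix. -/
def IsRGS (l : List ℕ) : Prop :=
  l.getD 0 1 = 1 ∧ (∀ x ∈ l, 1 ≤ x) ∧
  ∀ i, i + 1 < l.length → l.getD (i + 1) 0 ≤ (l.take (i + 1)).foldr max 0 + 1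

/-- `l` contains a (classical) occurrence of 1-2-1-2: a subsequence a,b,a,b with a < b. -/
def Crossing (l : List ℕ) : Prop :=
  ∃ i j k m : ℕ, i < j ∧ j < k ∧ k < m ∧ m < l.length ∧
    l.getD i 0 = l.getD k 0 ∧ l.getD j 0 = l.getD m 0 ∧ l.getD i 0 < l.getD j 0

/-- `l` is the canonical sequential form of a non-crossing partition of [n]. -/
def NCseq (n : ℕ) (l : List ℕ) : Prop := l.length = n ∧ IsRGS l ∧ ¬ Crossing l

/-- Two lists of the same length are order-isomorphic. -/
def OrdIso (s t : List ℕ) : Prop :=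
  s.length = t.length ∧ ∀ j k, j < s.length → k < s.length →
    (s.getD j 0 < s.getD k 0 ↔ t.getD j 0 < t.getD k 0)

/-- The subword pattern `τ` occurs in `l` starting at position `i`. -/
def occAt (τ l : List ℕ) (i : ℕ) : Prop := OrdIso τ ((l.drop i).take τ.length)

/-- The number of occurrences of the subword pattern `τ` in `l`. -/
noncomputable def occCount (τ l : List ℕ) : ℕ := Nat.card {i : ℕ // occAt τ l i}

/-- The total number of occurrences of the subword pattern `τ` over all
members of NC_n, counted with multiplicity (as marked occurrences). -/
noncomputable def totalOcc (n : ℕ) (τ : List ℕ) : ℕ :=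
  Nat.card {p : List ℕ × ℕ // NCseq n p.1 ∧ occAt τ p.1 p.2}

/-- The generating function F(x,q) = Σ_n (Σ_{π ∈ NC_n} q^{occ_{122}(π)}) x^n,
as a formal power series in x over ℚ[q]: the coefficient of x^n is the
polynomial Σ_k #{π ∈ NC_n : occ_{122}(π) = k}·q^k. -/
noncomputable def F122 : PowerSeries (Polynomial ℚ) :=
  PowerSeries.mk fun n =>
    ∑ k ∈ Finset.range (n + 1),
      (Nat.card {l : List ℕ // NCseq n l ∧ occCount [1, 2, 2] l = k}) •
        (Polynomial.X ^ k : Polynomial ℚ)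

namespace NC19
open List Finset

lemma le_foldrMax {x : ℕ} {l : List ℕ} (h : x ∈ l) : x ≤ l.foldr max 0 := by
  induction l with
  | nil => simp at h
  | cons a t ih =>
    rcases List.mem_cons.1 h with rfl | h
    · simp
    · exact le_trans (ih h) (le_max_right _ _)

lemma foldrMax_le {b : ℕ} {l : List ℕ} (h : ∀ x ∈ l, x ≤ b) : l.foldr max 0 ≤ b := by
  induction l with
  | nil => simp
  | cons a t ih =>
    simp only [List.foldr_cons, max_le_iff]
    exact ⟨h a (by simp), ih fun x hx => h x (by simp [hx])⟩

lemma foldrMax_mem {l : List ℕ} : l.foldr max 0 = 0 ∨ l.foldr max 0 ∈ l := by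
  induction l with
  | nil => simp
  | cons a t ih =>
    simp only [List.foldr_cons]
    rcases le_total a (t.foldr max 0) with h | h
    · rw [max_eq_right h]
      rcases ih with h0 | hm
      · exact Or.inl h0
      · exact Or.inr (List.mem_cons_of_mem _ hm)
    · rw [max_eq_left h]
      exact Or.inr List.mem_cons_self

lemma foldrMax_append (s t : List ℕ) :
    (s ++ t).foldr max 0 = max (s.foldr max 0) (t.foldr max 0) := by
  induction s with
  | nil => simp
  | cons a s ih => simp [ih, max_assoc]

def occP (l : List ℕ) (i : ℕ) : Prop :=
  i + 3 ≤ l.length ∧ l.getD i 0 < l.getD (i+1) 0 ∧ l.getD (i+1) 0 = l.getD (i+2) 0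

instance (l : List ℕ) : DecidablePred (occP l) := fun i => by
  unfold occP; infer_instance

lemma getD_take_drop (l : List ℕ) (i j : ℕ) (hj : j < 3) (h : i + j < l.length) :
    (((l.drop i).take 3).getD j 0) = l.getD (i + j) 0 := by
  have h1 : j < ((l.drop i).take 3).length := by
    simp [List.length_take, List.length_drop]; omega
  rw [List.getD_eq_getElem _ _ h1, List.getElem_take, List.getElem_drop,
    List.getD_eq_getElem _ _ (by omega)]

lemma occAt_iff (l : List ℕ) (i : ℕ) : occAt [1,2,2] l i ↔ occP l i := by
  unfold occAt OrdIso occP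
  simp only [List.length_cons, List.length_nil]
  constructor
  · rintro ⟨hlen, h⟩
    have hl3 : i + 3 ≤ l.length := by
      by_contra hc
      rw [List.length_take, List.length_drop] at hlen
      omega
    have e0 := getD_take_drop l i 0 (by omega) (by omega)
    have e1 := getD_take_drop l i 1 (by omega) (by omega)
    have e2 := getD_take_drop l i 2 (by omega) (by omega)
    have h01 := h 0 1 (by omega) (by omega)
    have h12 := h 1 2 (by omega) (by omega)
    have h21 := h 2 1 (by omega) (by omega)
    simp only [e0, e1, e2, Nat.add_zero] at h01 h12 h21
    have hab := h01.mp (by decide)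
    have h1 : ¬ (l.getD (i+1) 0 < l.getD (i+2) 0) := fun hc => absurd (h12.mpr hc) (by decide)
    have h2 : ¬ (l.getD (i+2) 0 < l.getD (i+1) 0) := fun hc => absurd (h21.mpr hc) (by decide)
    exact ⟨hl3, hab, by omega⟩
  · rintro ⟨hl3, hlt, heq⟩
    have hlen : (2+1 : ℕ) = ((l.drop i).take 3).length := by
      rw [List.length_take, List.length_drop]; omega
    refine ⟨hlen, ?_⟩
    intro j k hj hk
    have ej := getD_take_drop l i j (by omega) (by omega)
    have ek := getD_take_drop l i k (by omega) (by omega)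
    rw [ej, ek]
    interval_cases j <;> interval_cases k <;> simp_all <;> omega

lemma occCount_eq (l : List ℕ) :
    occCount [1,2,2] l = ((Finset.range l.length).filter (occP l)).card := by
  unfold occCount
  have e : ∀ i : ℕ, occAt [1,2,2] l i ↔ i ∈ (Finset.range l.length).filter (occP l) := by
    intro i
    rw [occAt_iff, Finset.mem_filter, Finset.mem_range]
    unfold occP
    constructor
    · intro h; exact ⟨by omega, h⟩
    · tauto
  rw [Nat.card_congr (Equiv.subtypeEquivRight e), Nat.card_eq_finsetCard]

lemma occCount_le (l : List ℕ) : occCount [1,2,2] l ≤ l.length := by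
  rw [occCount_eq]
  exact le_trans (Finset.card_filter_le _ _) (by simp)


instance decIsRGS (l : List ℕ) : Decidable (IsRGS l) := by
  unfold IsRGS
  have : (∀ i, i + 1 < l.length → l.getD (i + 1) 0 ≤ (l.take (i + 1)).foldr max 0 + 1)
      ↔ ∀ i < l.length, i + 1 < l.length → l.getD (i + 1) 0 ≤ (l.take (i + 1)).foldr max 0 + 1 := by
    constructor
    · intro h i _ h2; exact h i h2
    · intro h i h2; exact h i (by omega) h2
  rw [this]
  infer_instance

instance decCrossing (l : List ℕ) : Decidable (Crossing l) := by
  unfold Crossing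
  have : (∃ i j k m : ℕ, i < j ∧ j < k ∧ k < m ∧ m < l.length ∧
      l.getD i 0 = l.getD k 0 ∧ l.getD j 0 = l.getD m 0 ∧ l.getD i 0 < l.getD j 0)
      ↔ ∃ i < l.length, ∃ j < l.length, ∃ k < l.length, ∃ m < l.length,
        i < j ∧ j < k ∧ k < m ∧ m < l.length ∧
        l.getD i 0 = l.getD k 0 ∧ l.getD j 0 = l.getD m 0 ∧ l.getD i 0 < l.getD j 0 := by
    constructor
    · rintro ⟨i, j, k, m, h⟩
      exact ⟨i, by omega, j, by omega, k, by omega, m, by omega, h⟩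
    · rintro ⟨i, _, j, _, k, _, m, _, h⟩
      exact ⟨i, j, k, m, h⟩
  rw [this]
  infer_instance

instance decNCseq (n : ℕ) (l : List ℕ) : Decidable (NCseq n l) := by
  unfold NCseq; infer_instance

/-- All lists of length `n` with entries `< m`. -/
def listsLE : ℕ → ℕ → Finset (List ℕ)
  | 0, _ => {[]}
  | n+1, m => ((Finset.range m) ×ˢ listsLE n m).map
      ⟨fun p => p.1 :: p.2, by rintro ⟨a, s⟩ ⟨b, t⟩ h; simpa using h⟩

lemma mem_listsLE {n m : ℕ} {l : List ℕ} :
    l ∈ listsLE n m ↔ l.length = n ∧ ∀ x ∈ l, x < m := by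
  induction n generalizing l with
  | zero =>
    simp only [listsLE, Finset.mem_singleton]
    constructor
    · rintro rfl; simp
    · rintro ⟨h, -⟩; exact List.length_eq_zero_iff.1 h
  | succ n ih =>
    simp only [listsLE, Finset.mem_map, Function.Embedding.coeFn_mk, Finset.mem_product]
    constructor
    · rintro ⟨⟨a, s⟩, ⟨ha, hs⟩, rfl⟩
      rcases ih.1 hs with ⟨h1, h2⟩
      refine ⟨by show (a :: s).length = n + 1; simp [h1], ?_⟩
      intro x hx
      rcases List.mem_cons.1 hx with rfl | hx
      · simpa using ha
      · exact h2 x hx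
    · rintro ⟨h1, h2⟩
      cases l with
      | nil => simp at h1
      | cons a s =>
        refine ⟨⟨a, s⟩, ⟨?_, ih.2 ⟨by simpa using h1, fun x hx => h2 x (by simp [hx])⟩⟩, rfl⟩
        simpa using h2 a (by simp)

lemma rgs_entry_le {l : List ℕ} (h : IsRGS l) : ∀ k, (hk : k < l.length) → l[k] ≤ k + 1 := by
  obtain ⟨h0, _, hg⟩ := h
  intro k
  induction k using Nat.strong_induction_on with
  | _ k ih =>
    intro hk
    cases k with
    | zero =>
      have : l.getD 0 1 = l[0] := List.getD_eq_getElem l 1 hk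
      omega
    | succ k =>
      have hb := hg k hk
      rw [List.getD_eq_getElem l 0 hk] at hb
      have hm : (l.take (k+1)).foldr max 0 ≤ k + 1 := by
        apply foldrMax_le
        intro x hx
        rw [List.mem_iff_getElem] at hx
        obtain ⟨j, hj, rfl⟩ := hx
        have hj3 : j < k + 1 := by simp [List.length_take] at hj; omega
        rw [List.getElem_take]
        exact le_trans (ih j (by omega) (by omega)) (by omega)
      omega

lemma ncseq_mem_listsLE {n : ℕ} {l : List ℕ} (h : NCseq n l) : l ∈ listsLE n (n+2) := by
  obtain ⟨hlen, hrgs, -⟩ := h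
  rw [mem_listsLE]
  refine ⟨hlen, fun x hx => ?_⟩
  rw [List.mem_iff_getElem] at hx
  obtain ⟨j, hj, rfl⟩ := hx
  have := rgs_entry_le hrgs j hj
  omega

/-- The finset of canonical sequential forms of non-crossing partitions of [n]. -/
def ncFinset (n : ℕ) : Finset (List ℕ) := (listsLE n (n+2)).filter (NCseq n)

lemma mem_ncFinset {n : ℕ} {l : List ℕ} : l ∈ ncFinset n ↔ NCseq n l := by
  rw [ncFinset, Finset.mem_filter]
  exact ⟨fun h => h.2, fun h => ⟨ncseq_mem_listsLE h, h⟩⟩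

/-- Value completeness: every value between 1 and the max of a prefix occurs in the prefix. -/
lemma rgs_surjOn {l : List ℕ} (h : IsRGS l) :
    ∀ k, k ≤ l.length → ∀ v, 1 ≤ v → v ≤ (l.take k).foldr max 0 →
      ∃ j, j < k ∧ l.getD j 0 = v := by
  obtain ⟨h0, hpos, hg⟩ := h
  intro k
  induction k with
  | zero => intro _ v h1 h2; simp at h2; omega
  | succ k ih =>
    intro hk v h1 h2
    have hkl : k < l.length := by omega
    rw [List.take_succ, List.getElem?_eq_getElem hkl] at h2
    simp only [Option.toList_some, foldrMax_append, List.foldr_cons, List.foldr_nil,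
      Nat.max_zero] at h2
    rcases le_or_gt v ((l.take k).foldr max 0) with hv | hv
    · obtain ⟨j, hj, hj2⟩ := ih (by omega) v h1 hv
      exact ⟨j, by omega, hj2⟩
    · have hvk : v ≤ l[k] := by rcases le_max_iff.1 h2 with h | h; omega; exact h
      cases k with
      | zero =>
        have : l.getD 0 1 = l[0] := List.getD_eq_getElem l 1 hkl
        exact ⟨0, by omega, by rw [List.getD_eq_getElem l 0 hkl]; omega⟩
      | succ k' =>
        have hb := hg k' hkl
        rw [List.getD_eq_getElem l 0 hkl] at hb
        exact ⟨k'+1, by omega, by rw [List.getD_eq_getElem l 0 hkl]; omega⟩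


lemma getD_mem {l : List ℕ} {j : ℕ} (h : j < l.length) : l.getD j 0 ∈ l := by
  rw [List.getD_eq_getElem _ _ h]; exact List.getElem_mem h

lemma getD_mem_take {l : List ℕ} {j k : ℕ} (h1 : j < k) (h2 : j < l.length) :
    l.getD j 0 ∈ l.take k := by
  rw [List.mem_take_iff_getElem]
  exact ⟨j, by omega, (List.getD_eq_getElem _ _ h2).symm⟩

lemma mem_take_pos {x : ℕ} {l : List ℕ} {k : ℕ} (h : x ∈ l.take k) :
    ∃ j, j < k ∧ j < l.length ∧ l.getD j 0 = x := by
  rw [List.mem_take_iff_getElem] at h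
  obtain ⟨j, hj, rfl⟩ := h
  exact ⟨j, by omega, by omega, List.getD_eq_getElem _ _ (by omega)⟩

lemma foldrMax_map_sub1 (s : List ℕ) :
    ((s.map (· - 1)).foldr max 0) = s.foldr max 0 - 1 := by
  induction s with
  | nil => simp
  | cons a t ih => simp [ih]; omega

def emb (m x : ℕ) : ℕ := if x = 1 then 1 else x + m

def psi (β σ : List ℕ) : List ℕ :=
  1 :: (β.map (· + 1) ++ σ.map (emb (β.foldr max 0)))

lemma emb_eq_iff {m x y : ℕ} (hx : 1 ≤ x) (hy : 1 ≤ y) : emb m x = emb m y ↔ x = y := by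
  unfold emb; split_ifs <;> omega

lemma emb_lt_iff {m x y : ℕ} (hx : 1 ≤ x) (hy : 1 ≤ y) : emb m x < emb m y ↔ x < y := by
  unfold emb; split_ifs <;> omega

lemma psi_length (β σ : List ℕ) : (psi β σ).length = β.length + σ.length + 1 := by
  simp [psi]

lemma psi_getD_zero (β σ : List ℕ) : (psi β σ).getD 0 0 = 1 := rfl

lemma psi_getD_beta {β : List ℕ} (σ : List ℕ) {j : ℕ} (h : j < β.length) :
    (psi β σ).getD (j+1) 0 = β.getD j 0 + 1 := by
  rw [psi, List.getD_cons_succ,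
    List.getD_eq_getElem _ _ (by simp; omega),
    List.getElem_append_left (by simp; omega),
    List.getElem_map, List.getD_eq_getElem _ _ h]

lemma psi_getD_sigma (β : List ℕ) {σ : List ℕ} {j : ℕ} (h : j < σ.length) :
    (psi β σ).getD (β.length + 1 + j) 0 = emb (β.foldr max 0) (σ.getD j 0) := by
  have e : β.length + 1 + j = (β.length + j) + 1 := by omega
  rw [psi, e, List.getD_cons_succ,
    List.getD_eq_getElem _ _ (by simp; omega),
    List.getElem_append_right (by simp),
    List.getElem_map]
  rw [List.getD_eq_getElem _ _ h]
  congr 1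
  simp

lemma psi_isRGS {β σ : List ℕ} (hβ : IsRGS β) (hσ : IsRGS σ) : IsRGS (psi β σ) := by
  obtain ⟨hβ0, hβ1, hβg⟩ := hβ
  obtain ⟨hσ0, hσ1, hσg⟩ := hσ
  have hlen : (psi β σ).length = β.length + σ.length + 1 := psi_length β σ
  refine ⟨by rw [psi]; rfl, ?_, ?_⟩
  · intro x hx
    rw [psi] at hx
    rcases List.mem_cons.1 hx with rfl | hx
    · omega
    · rcases List.mem_append.1 hx with hx | hx
      · obtain ⟨y, -, rfl⟩ := List.mem_map.1 hx
        omega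
      · obtain ⟨y, hy, rfl⟩ := List.mem_map.1 hx
        have := hσ1 y hy
        rw [emb]
        split_ifs <;> omega
  · intro i hi
    rw [hlen] at hi
    have hP0 : (psi β σ).getD 0 0 ≤ ((psi β σ).take (i+1)).foldr max 0 :=
      le_foldrMax (getD_mem_take (by omega) (by omega))
    rw [psi_getD_zero] at hP0
    by_cases hcase : i < β.length
    · rw [psi_getD_beta σ hcase]
      cases i with
      | zero =>
        have hb00 : β.getD 0 0 = 1 := by
          rw [List.getD_eq_getElem _ _ hcase]
          rw [List.getD_eq_getElem _ _ hcase] at hβ0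
          exact hβ0
        omega
      | succ i' =>
        have hg := hβg i' hcase
        have hb0len : 0 < β.length := by omega
        have hb00 : β.getD 0 0 = 1 := by
          rw [List.getD_eq_getElem _ _ hb0len]
          rw [List.getD_eq_getElem _ _ hb0len] at hβ0
          exact hβ0
        have hM1 : 1 ≤ (β.take (i'+1)).foldr max 0 := by
          have := le_foldrMax (getD_mem_take (show 0 < i'+1 by omega) hb0len)
          omega
        rcases foldrMax_mem (l := β.take (i'+1)) with h0 | hmem
        · omega
        · obtain ⟨j, hj1, hj2, hj3⟩ := mem_take_pos hmem
          have hle := le_foldrMax (getD_mem_take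
            (show j+1 < i'+1+1 by omega) (show j+1 < (psi β σ).length by omega))
          rw [psi_getD_beta σ hj2] at hle
          omega
    · obtain ⟨j, rfl⟩ : ∃ j, i = β.length + j := ⟨i - β.length, by omega⟩
      have hj : j < σ.length := by omega
      have hs0len : 0 < σ.length := by omega
      have hs00 : σ.getD 0 0 = 1 := by
        rw [List.getD_eq_getElem _ _ hs0len]
        rw [List.getD_eq_getElem _ _ hs0len] at hσ0
        exact hσ0
      have hval := psi_getD_sigma β hj
      rw [show β.length + 1 + j = β.length + j + 1 from by omega] at hval
      rw [hval]
      by_cases h1 : σ.getD j 0 = 1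
      · rw [emb, if_pos h1]
        omega
      · have hσj1 : 1 ≤ σ.getD j 0 := hσ1 _ (getD_mem hj)
        obtain ⟨j', rfl⟩ : ∃ j', j = j'+1 := by
          refine ⟨j - 1, ?_⟩
          rcases Nat.eq_zero_or_pos j with rfl | hpos
          · exact absurd hs00 h1
          · omega
        have hg := hσg j' hj
        have hM'1 : 1 ≤ (σ.take (j'+1)).foldr max 0 := by
          have := le_foldrMax (getD_mem_take (show 0 < j'+1 by omega) hs0len)
          omega
        rcases le_or_gt ((σ.take (j'+1)).foldr max 0) 1 with hM' | hM'
        · have hPm : β.foldr max 0 + 1 ≤ ((psi β σ).take (β.length+(j'+1)+1)).foldr max 0 := by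
            rcases foldrMax_mem (l := β) with h0 | hmem
            · omega
            · obtain ⟨k, hk, hkeq⟩ := List.mem_iff_getElem.1 hmem
              have hle := le_foldrMax (getD_mem_take
                (show k+1 < β.length+(j'+1)+1 by omega)
                (show k+1 < (psi β σ).length by omega))
              rw [psi_getD_beta σ hk] at hle
              rw [List.getD_eq_getElem _ _ hk, hkeq] at hle
              omega
          rw [emb, if_neg h1]
          omega
        · rcases foldrMax_mem (l := σ.take (j'+1)) with h0 | hmem
          · omega
          · obtain ⟨k, hk1, hk2, hk3⟩ := mem_take_pos hmem
            have hle := le_foldrMax (getD_mem_take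
              (show β.length+1+k < β.length+(j'+1)+1 by omega)
              (show β.length+1+k < (psi β σ).length by omega))
            rw [psi_getD_sigma β hk2] at hle
            rw [hk3, emb] at hle
            rw [emb, if_neg h1]
            split_ifs at hle <;> omega

lemma psi_val_pos {β σ : List ℕ} (hβ : IsRGS β) (hσ : IsRGS σ) {p : ℕ}
    (hp : p < (psi β σ).length) : 1 ≤ (psi β σ).getD p 0 :=
  (psi_isRGS hβ hσ).2.1 _ (getD_mem hp)

lemma psi_val_beta_bounds {β : List ℕ} (σ : List ℕ) (hβ1 : ∀ x ∈ β, 1 ≤ x) {p : ℕ}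
    (h1 : 1 ≤ p) (h2 : p ≤ β.length) :
    2 ≤ (psi β σ).getD p 0 ∧ (psi β σ).getD p 0 ≤ β.foldr max 0 + 1 := by
  obtain ⟨j, rfl⟩ : ∃ j, p = j + 1 := ⟨p - 1, by omega⟩
  have hj : j < β.length := by omega
  rw [psi_getD_beta σ hj]
  have h3 := hβ1 _ (getD_mem hj)
  have h4 := le_foldrMax (getD_mem hj)
  omega

lemma psi_val_sigma_cases (β : List ℕ) {σ : List ℕ} (hσ1 : ∀ x ∈ σ, 1 ≤ x) {p : ℕ}
    (h1 : β.length + 1 ≤ p) (h2 : p < (psi β σ).length) :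
    (psi β σ).getD p 0 = 1 ∨ β.foldr max 0 + 2 ≤ (psi β σ).getD p 0 := by
  obtain ⟨j, rfl⟩ : ∃ j, p = β.length + 1 + j := ⟨p - (β.length+1), by omega⟩
  have hj : j < σ.length := by rw [psi_length] at h2; omega
  rw [psi_getD_sigma β hj]
  have h3 := hσ1 _ (getD_mem hj)
  rw [emb]
  split_ifs <;> omega

lemma psi_crossing_beta {β σ : List ℕ} (h : Crossing β) : Crossing (psi β σ) := by
  obtain ⟨i, j, k, m, hij, hjk, hkm, hmlen, e1, e2, e3⟩ := h
  refine ⟨i+1, j+1, k+1, m+1, by omega, by omega, by omega,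
    by rw [psi_length]; omega, ?_, ?_, ?_⟩ <;>
    rw [psi_getD_beta σ (by omega), psi_getD_beta σ (by omega)] <;> omega

lemma psi_crossing_sigma {β σ : List ℕ} (hσ1 : ∀ x ∈ σ, 1 ≤ x) (h : Crossing σ) :
    Crossing (psi β σ) := by
  obtain ⟨i, j, k, m, hij, hjk, hkm, hmlen, e1, e2, e3⟩ := h
  have vi := hσ1 _ (getD_mem (show i < σ.length by omega))
  have vj := hσ1 _ (getD_mem (show j < σ.length by omega))
  have vk := hσ1 _ (getD_mem (show k < σ.length by omega))
  have vm := hσ1 _ (getD_mem hmlen)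
  refine ⟨β.length+1+i, β.length+1+j, β.length+1+k, β.length+1+m, by omega, by omega, by omega,
    by rw [psi_length]; omega, ?_, ?_, ?_⟩ <;>
    rw [psi_getD_sigma β (by omega), psi_getD_sigma β (by omega)]
  · rw [emb_eq_iff vi vk]; exact e1
  · rw [emb_eq_iff vj vm]; exact e2
  · rw [emb_lt_iff vi vj]; exact e3

lemma sigma_all {β σ : List ℕ} (hσ1 : ∀ x ∈ σ, 1 ≤ x) {p1 p2 p3 p4 : ℕ}
    (h12 : p1 < p2) (h23 : p2 < p3) (h34 : p3 < p4) (h4 : p4 < (psi β σ).length)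
    (hp1 : β.length + 1 ≤ p1)
    (e13 : (psi β σ).getD p1 0 = (psi β σ).getD p3 0)
    (e24 : (psi β σ).getD p2 0 = (psi β σ).getD p4 0)
    (lt12 : (psi β σ).getD p1 0 < (psi β σ).getD p2 0) : Crossing σ := by
  rw [psi_length] at h4
  obtain ⟨q1, rfl⟩ : ∃ q, p1 = β.length + 1 + q := ⟨p1 - (β.length+1), by omega⟩
  obtain ⟨q2, rfl⟩ : ∃ q, p2 = β.length + 1 + q := ⟨p2 - (β.length+1), by omega⟩
  obtain ⟨q3, rfl⟩ : ∃ q, p3 = β.length + 1 + q := ⟨p3 - (β.length+1), by omega⟩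
  obtain ⟨q4, rfl⟩ : ∃ q, p4 = β.length + 1 + q := ⟨p4 - (β.length+1), by omega⟩
  have hq4 : q4 < σ.length := by omega
  rw [psi_getD_sigma β (show q1 < σ.length by omega),
    psi_getD_sigma β (show q3 < σ.length by omega)] at e13
  rw [psi_getD_sigma β (show q2 < σ.length by omega),
    psi_getD_sigma β hq4] at e24
  rw [psi_getD_sigma β (show q1 < σ.length by omega),
    psi_getD_sigma β (show q2 < σ.length by omega)] at lt12
  refine ⟨q1, q2, q3, q4, by omega, by omega, by omega, hq4, ?_, ?_, ?_⟩
  · exact (emb_eq_iff (hσ1 _ (getD_mem (show q1 < σ.length by omega)))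
      (hσ1 _ (getD_mem (show q3 < σ.length by omega)))).1 e13
  · exact (emb_eq_iff (hσ1 _ (getD_mem (show q2 < σ.length by omega)))
      (hσ1 _ (getD_mem hq4))).1 e24
  · exact (emb_lt_iff (hσ1 _ (getD_mem (show q1 < σ.length by omega)))
      (hσ1 _ (getD_mem (show q2 < σ.length by omega)))).1 lt12

lemma psi_crossing_rev {β σ : List ℕ} (hβ : IsRGS β) (hσ : IsRGS σ)
    (h : Crossing (psi β σ)) : Crossing β ∨ Crossing σ := by
  obtain ⟨i, j, k, m', hij, hjk, hkm, hmlen, e_ik, e_jm, lt_ij⟩ := h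
  have hmlen' : m' < β.length + σ.length + 1 := by rw [psi_length] at hmlen; omega
  have hLi : 1 ≤ (psi β σ).getD i 0 := psi_val_pos hβ hσ (by omega)
  obtain ⟨hβ0, hβ1, -⟩ := hβ
  obtain ⟨hσ0, hσ1, -⟩ := hσ
  have hLj2 : 2 ≤ (psi β σ).getD j 0 := by omega
  by_cases hjr : j ≤ β.length
  · -- the repeated letter pair (j, m') lies in the β region
    have hj2 := psi_val_beta_bounds σ hβ1 (show 1 ≤ j by omega) hjr
    have hm'r : m' ≤ β.length := by
      by_contra hc
      rcases psi_val_sigma_cases β hσ1 (show β.length + 1 ≤ m' by omega) (by omega) with h1 | h1 <;>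
        omega
    have hk2 := psi_val_beta_bounds σ hβ1 (show 1 ≤ k by omega) (by omega)
    have hi1 : 1 ≤ i := by
      rcases Nat.eq_zero_or_pos i with rfl | h1
      · rw [psi_getD_zero] at e_ik; omega
      · exact h1
    left
    have vi := psi_getD_beta σ (show i-1 < β.length by omega)
    have vj := psi_getD_beta σ (show j-1 < β.length by omega)
    have vk := psi_getD_beta σ (show k-1 < β.length by omega)
    have vm := psi_getD_beta σ (show m'-1 < β.length by omega)
    rw [show i-1+1 = i by omega] at vi
    rw [show j-1+1 = j by omega] at vj
    rw [show k-1+1 = k by omega] at vk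
    rw [show m'-1+1 = m' by omega] at vm
    exact ⟨i-1, j-1, k-1, m'-1, by omega, by omega, by omega, by omega,
      by omega, by omega, by omega⟩
  · push_neg at hjr
    have hσne : 0 < σ.length := by omega
    have hLjc : β.foldr max 0 + 2 ≤ (psi β σ).getD j 0 := by
      rcases psi_val_sigma_cases β hσ1 (show β.length + 1 ≤ j by omega) (by omega) with h1 | h1 <;>
        omega
    have hcases : i = 0 ∨ (1 ≤ i ∧ i ≤ β.length) ∨ β.length + 1 ≤ i := by omega
    rcases hcases with rfl | hc | hc
    · -- replace position 0 by the first position of the σ region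
      have hs00 : σ.getD 0 0 = 1 := by
        rw [List.getD_eq_getElem _ _ hσne]
        rw [List.getD_eq_getElem _ _ hσne] at hσ0
        exact hσ0
      have hva : (psi β σ).getD (β.length + 1 + 0) 0 = 1 := by
        rw [psi_getD_sigma β hσne, hs00]; rfl
      have hja : β.length + 1 < j := by
        rcases Nat.lt_or_ge (β.length+1) j with h1 | h1
        · exact h1
        · exfalso
          have : j = β.length + 1 := by omega
          subst this
          rw [show β.length + 1 = β.length + 1 + 0 from rfl] at hLjc
          omega
      right
      rw [psi_getD_zero] at e_ik lt_ij
      refine sigma_all hσ1 (show β.length+1+0 < j by omega) hjk hkm hmlen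
        (by omega) ?_ e_jm ?_
      · rw [hva]; exact e_ik
      · rw [hva]; omega
    · exfalso
      have hi2 := psi_val_beta_bounds σ hβ1 hc.1 hc.2
      have hkr : β.length + 1 ≤ k := by omega
      rcases psi_val_sigma_cases β hσ1 hkr (by omega) with h1 | h1 <;> omega
    · right
      exact sigma_all hσ1 hij hjk hkm hmlen hc e_ik e_jm lt_ij

def eB (β : List ℕ) : Prop := 2 ≤ β.length ∧ β.getD 0 0 = β.getD 1 0

instance : DecidablePred eB := fun β => by unfold eB; infer_instance

lemma occP_psi_iff {β σ : List ℕ} (hβ : IsRGS β) (hσ : IsRGS σ) (i : ℕ) :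
    occP (psi β σ) i ↔
      ((i = 0 ∧ eB β) ∨ (∃ j, occP β j ∧ i = j + 1) ∨ (∃ j, occP σ j ∧ i = β.length + 1 + j)) := by
  have hσ1 := hσ.2.1
  have hβ1 := hβ.2.1
  constructor
  · rintro ⟨hlen, hlt, heq⟩
    rw [psi_length] at hlen
    have hσ00 : 0 < σ.length → σ.getD 0 0 = 1 := by
      intro hne
      have := hσ.1
      rw [List.getD_eq_getElem _ _ hne]
      rw [List.getD_eq_getElem _ _ hne] at this
      exact this
    have hv0 : 0 < σ.length → (psi β σ).getD (β.length + 1 + 0) 0 = 1 := by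
      intro hne
      rw [psi_getD_sigma β hne, hσ00 hne]
      rfl
    rcases Nat.eq_zero_or_pos i with rfl | hi1
    · -- i = 0
      rcases Nat.lt_or_ge 1 β.length with ha | ha
      · -- a ≥ 2
        left
        rw [psi_getD_beta σ (show 0 < β.length by omega),
          psi_getD_beta σ (show 1 < β.length by omega)] at heq
        exact ⟨rfl, by omega, by omega⟩
      · exfalso
        rcases Nat.eq_zero_or_pos β.length with ha0 | ha1
        · -- a = 0 : position 1 is σ₀
          have hc : 0 < σ.length := by omega
          have := hv0 hc
          rw [show β.length + 1 + 0 = 0 + 1 from by omega] at this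
          rw [psi_getD_zero, this] at hlt
          omega
        · -- a = 1 : position 2 is σ₀
          have ha1' : β.length = 1 := by omega
          have hc : 0 < σ.length := by omega
          have := hv0 hc
          rw [show β.length + 1 + 0 = 0 + 1 + 1 from by omega] at this
          rw [psi_getD_beta σ (show 0 < β.length by omega), this] at heq
          have := hβ1 _ (getD_mem (show 0 < β.length by omega))
          omega
    · rcases Nat.lt_or_ge (i+2) (β.length+1) with hir | hir
      · -- i, i+1, i+2 all in β region
        right; left
        refine ⟨i - 1, ⟨by omega, ?_, ?_⟩, by omega⟩
        · have v1 := psi_getD_beta σ (show i-1 < β.length by omega)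
          have v2 := psi_getD_beta σ (show i-1+1 < β.length by omega)
          rw [show i-1+1 = i from by omega] at v1
          rw [show i-1+1+1 = i+1 from by omega] at v2
          rw [v1, v2] at hlt
          rw [show i-1+1 = i from by omega] at v2
          omega
        · have v2 := psi_getD_beta σ (show i-1+1 < β.length by omega)
          have v3 := psi_getD_beta σ (show i-1+2 < β.length by omega)
          rw [show i-1+1+1 = i+1 from by omega] at v2
          rw [show i-1+2+1 = i+2 from by omega] at v3
          rw [v2, v3] at heq
          omega
      · rcases Nat.lt_or_ge (i+2) (β.length + 2) with hir2 | hir2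
        · -- i+2 = a+1 : boundary, impossible
          exfalso
          have hie : i + 2 = β.length + 1 := by omega
          have hc : 0 < σ.length := by omega
          have := hv0 hc
          rw [show β.length + 1 + 0 = i + 2 from by omega] at this
          rw [this] at heq
          have v2 := psi_getD_beta σ (show i < β.length by omega)
          have := hβ1 _ (getD_mem (show i < β.length by omega))
          rw [v2] at heq
          omega
        · rcases Nat.lt_or_ge i (β.length + 1) with hir3 | hir3
          · -- i = a : L_{i+1} = 1, impossible
            exfalso
            have hie : i = β.length := by omega
            have hc : 0 < σ.length := by omega
            have := hv0 hc
            rw [show β.length + 1 + 0 = i + 1 from by omega] at this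
            rw [this] at hlt
            have := psi_val_pos hβ hσ (show i < (psi β σ).length by rw [psi_length]; omega)
            omega
          · -- all in σ region
            right; right
            obtain ⟨j, rfl⟩ : ∃ j, i = β.length + 1 + j := ⟨i - (β.length+1), by omega⟩
            have hj3 : j + 3 ≤ σ.length := by omega
            have v1 := psi_getD_sigma β (show j < σ.length by omega)
            have v2 := psi_getD_sigma β (show j+1 < σ.length by omega)
            have v3 := psi_getD_sigma β (show j+2 < σ.length by omega)
            rw [show β.length+1+(j+1) = β.length+1+j+1 from by omega] at v2
            rw [show β.length+1+(j+2) = β.length+1+j+2 from by omega] at v3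
            rw [v1, v2] at hlt
            rw [v2, v3] at heq
            refine ⟨j, ⟨hj3, ?_, ?_⟩, rfl⟩
            · exact (emb_lt_iff (hσ1 _ (getD_mem (by omega)))
                (hσ1 _ (getD_mem (by omega)))).1 hlt
            · exact (emb_eq_iff (hσ1 _ (getD_mem (by omega)))
                (hσ1 _ (getD_mem (by omega)))).1 heq
  · rintro (⟨rfl, h2, h3⟩ | ⟨j, ⟨hj3, hlt, heq⟩, rfl⟩ | ⟨j, ⟨hj3, hlt, heq⟩, rfl⟩)
    · have v1 := psi_getD_beta σ (show 0 < β.length by omega)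
      have v2 := psi_getD_beta σ (show 1 < β.length by omega)
      refine ⟨by rw [psi_length]; omega, ?_, ?_⟩
      · rw [psi_getD_zero, show (0:ℕ)+1 = 0+1 from rfl, v1]
        have := hβ1 _ (getD_mem (show 0 < β.length by omega))
        omega
      · rw [show (0:ℕ)+1 = 0+1 from rfl, v1, show (0:ℕ)+2 = 1+1 from rfl, v2]
        omega
    · have v1 := psi_getD_beta σ (show j < β.length by omega)
      have v2 := psi_getD_beta σ (show j+1 < β.length by omega)
      have v3 := psi_getD_beta σ (show j+2 < β.length by omega)
      refine ⟨by rw [psi_length]; omega, ?_, ?_⟩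
      · rw [v1, v2]; omega
      · rw [show j+1+1 = j+2 from rfl, v2, v3]; omega
    · have v1 := psi_getD_sigma β (show j < σ.length by omega)
      have v2 := psi_getD_sigma β (show j+1 < σ.length by omega)
      have v3 := psi_getD_sigma β (show j+2 < σ.length by omega)
      rw [show β.length+1+(j+1) = β.length+1+j+1 from by omega] at v2
      rw [show β.length+1+(j+2) = β.length+1+j+2 from by omega] at v3
      refine ⟨by rw [psi_length]; omega, ?_, ?_⟩
      · rw [v1, v2]
        exact (emb_lt_iff (hσ1 _ (getD_mem (by omega))) (hσ1 _ (getD_mem (by omega)))).2 hlt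
      · rw [v2, v3]
        exact (emb_eq_iff (hσ1 _ (getD_mem (by omega))) (hσ1 _ (getD_mem (by omega)))).2 heq

lemma occCount_psi {β σ : List ℕ} (hβ : IsRGS β) (hσ : IsRGS σ) :
    occCount [1,2,2] (psi β σ)
      = occCount [1,2,2] β + occCount [1,2,2] σ + (if eB β then 1 else 0) := by
  rw [occCount_eq, occCount_eq, occCount_eq, psi_length]
  have hset : (Finset.range (β.length + σ.length + 1)).filter (occP (psi β σ))
      = (((Finset.range β.length).filter (occP β)).image (· + 1)
        ∪ ((Finset.range σ.length).filter (occP σ)).image (β.length + 1 + ·))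
        ∪ (if eB β then {0} else ∅) := by
    ext x
    simp only [Finset.mem_union, Finset.mem_image, Finset.mem_filter, Finset.mem_range]
    constructor
    · intro ⟨hx, hocc⟩
      rcases (occP_psi_iff hβ hσ x).1 hocc with ⟨rfl, he⟩ | ⟨j, hj, rfl⟩ | ⟨j, hj, rfl⟩
      · right; simp [he]
      · left; left; exact ⟨j, ⟨by have := hj.1; omega, hj⟩, rfl⟩
      · left; right; exact ⟨j, ⟨by have := hj.1; omega, hj⟩, rfl⟩
    · intro hx
      rcases hx with (⟨j, ⟨hj1, hj2⟩, rfl⟩ | ⟨j, ⟨hj1, hj2⟩, rfl⟩) | hx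
      · have hocc := (occP_psi_iff hβ hσ (j+1)).2 (Or.inr (Or.inl ⟨j, hj2, rfl⟩))
        exact ⟨by have := hj2.1; omega, hocc⟩
      · have hocc := (occP_psi_iff hβ hσ (β.length+1+j)).2 (Or.inr (Or.inr ⟨j, hj2, rfl⟩))
        exact ⟨by have := hj2.1; omega, hocc⟩
      · split_ifs at hx with he
        · simp only [Finset.mem_singleton] at hx
          subst hx
          exact ⟨by have := he.1; omega, (occP_psi_iff hβ hσ 0).2 (Or.inl ⟨rfl, he⟩)⟩
        · simp at hx
  rw [hset]
  rw [Finset.card_union_of_disjoint, Finset.card_union_of_disjoint,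
    Finset.card_image_of_injective _ (add_left_injective 1),
    Finset.card_image_of_injective _ (fun x y h => by simpa using h)]
  · split_ifs <;> simp
  · -- disjoint images
    rw [Finset.disjoint_left]
    intro x hA hB
    rw [Finset.mem_image] at hA
    obtain ⟨j, hj, rfl⟩ := hA
    rw [Finset.mem_image] at hB
    obtain ⟨j', hj', he⟩ := hB
    rw [Finset.mem_filter] at hj
    have := hj.2.1
    omega
  · rw [Finset.disjoint_left]
    intro x hA hC
    split_ifs at hC with he
    · simp only [Finset.mem_singleton] at hC
      subst hC
      rw [Finset.mem_union] at hA
      rcases hA with hA | hA <;>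
      · rw [Finset.mem_image] at hA
        obtain ⟨j, -, he2⟩ := hA
        omega
    · simp at hC

lemma getD_map {f : ℕ → ℕ} {l : List ℕ} {j : ℕ} (h : j < l.length) :
    (l.map f).getD j 0 = f (l.getD j 0) := by
  rw [List.getD_eq_getElem _ _ (by simpa using h), List.getElem_map, List.getD_eq_getElem _ _ h]

lemma getD_take {l : List ℕ} {j k : ℕ} (h1 : j < k) (h2 : j < l.length) :
    (l.take k).getD j 0 = l.getD j 0 := by
  rw [List.getD_eq_getElem _ _ (by rw [List.length_take]; omega), List.getElem_take,
    List.getD_eq_getElem _ _ h2]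

lemma getD_one_zero {l : List ℕ} (h : 0 < l.length) : l.getD 0 1 = l.getD 0 0 := by
  cases l with
  | nil => simp at h
  | cons a t => rfl

def phiP (l : List ℕ) : ℕ := l.tail.findIdx (fun y => y == 1)
def phiB (l : List ℕ) : List ℕ := (l.tail.take (phiP l)).map (· - 1)
def phiS (l : List ℕ) : List ℕ :=
  (l.tail.drop (phiP l)).map (fun y => if y = 1 then 1 else y - (phiB l).foldr max 0)

theorem decomp {n : ℕ} {l : List ℕ} (h : NCseq (n+1) l) :
    NCseq (phiP l) (phiB l) ∧ NCseq (n - phiP l) (phiS l) ∧ phiP l ≤ n ∧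
      l = psi (phiB l) (phiS l) := by
  obtain ⟨hlen, hrgs, hncr⟩ := h
  rcases l with _ | ⟨hd, t⟩
  · simp at hlen
  have hd1 : hd = 1 := hrgs.1
  subst hd1
  have htlen : t.length = n := by simpa using hlen
  simp only [phiP, phiB, phiS, List.tail_cons] at *
  set p := t.findIdx (fun y => y == 1) with hp
  have hp_le : p ≤ n := htlen ▸ List.findIdx_le_length
  have hmem1 : ∀ x ∈ t, 1 ≤ x := fun x hx => hrgs.2.1 x (by simp [hx])
  have hβval : ∀ j, j < p → 2 ≤ t.getD j 0 := by
    intro j hj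
    have hjt : j < t.length := by
      have := List.findIdx_le_length (p := fun y => y == 1) (xs := t)
      omega
    have hne := List.not_of_lt_findIdx hj
    rw [List.getD_eq_getElem _ _ hjt]
    have h1 := hmem1 _ (List.getElem_mem hjt)
    simp only [beq_eq_false_iff_ne, ne_eq] at hne
    omega
  have hσ0 : p < n → t.getD p 0 = 1 := by
    intro hpn
    have hpt : p < t.length := by omega
    have := List.findIdx_getElem (w := hpt)
    rw [List.getD_eq_getElem _ _ hpt]
    simpa [beq_iff_eq] using this
  have hl_getD : ∀ j, (1 :: t).getD (j+1) 0 = t.getD j 0 := fun j => List.getD_cons_succ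
  set T := (t.take p).foldr max 0 with hT
  have hT2 : 1 ≤ p → 2 ≤ T := by
    intro hp1
    have := le_foldrMax (getD_mem_take (show 0 < p by omega) (show 0 < t.length by omega))
    have := hβval 0 hp1
    omega
  have htake : ∀ k, k ≤ t.length → ((1 :: t).take (k+1)).foldr max 0 = max 1 ((t.take k).foldr max 0) := by
    intro k hk
    rw [List.take_succ_cons, List.foldr_cons]
  -- the σ-letters lemma
  have hσval : ∀ j, p ≤ j → j < n → t.getD j 0 = 1 ∨ max T 1 + 1 ≤ t.getD j 0 := by
    intro j hj1 hj2
    by_contra hcon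
    push_neg at hcon
    obtain ⟨hx1, hx2⟩ := hcon
    have hxm : 1 ≤ t.getD j 0 := hmem1 _ (getD_mem (by omega))
    have hx3 : 2 ≤ t.getD j 0 := by omega
    have hTge : 2 ≤ T := by omega
    have hp1 : 1 ≤ p := by
      by_contra hc
      have : p = 0 := by omega
      rw [this] at hT
      simp at hT
      omega
    have hjp : p < j := by
      rcases Nat.lt_or_ge p j with h1 | h1
      · exact h1
      · have : j = p := by omega
        subst this
        have := hσ0 (by omega)
        omega
    -- value completeness gives an occurrence of this letter before position p+1
    have hsurj := rgs_surjOn hrgs (p+1) (by simp; omega) (t.getD j 0) (by omega) ?_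
    · obtain ⟨j0, hj0p, hj0v⟩ := hsurj
      have hj01 : 1 ≤ j0 := by
        rcases Nat.eq_zero_or_pos j0 with rfl | h1
        · rw [show ((1:ℕ) :: t).getD 0 0 = 1 from rfl] at hj0v
          omega
        · exact h1
      exact hncr ⟨0, j0, p+1, j+1, by omega, by omega, by omega, by simp; omega,
        by rw [show ((1:ℕ) :: t).getD 0 0 = 1 from rfl, hl_getD p, hσ0 (by omega)],
        by rw [hj0v, hl_getD j],
        by rw [show ((1:ℕ) :: t).getD 0 0 = 1 from rfl, hj0v]; omega⟩
    · rw [htake p (by omega)]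
      omega
  -- lengths
  have hlB : ((t.take p).map (· - 1)).length = p := by
    rw [List.length_map, List.length_take]
    omega
  have hm : ((t.take p).map (· - 1)).foldr max 0 = T - 1 := foldrMax_map_sub1 _
  have hlS : ((t.drop p).map (fun y => if y = 1 then 1 else y - ((t.take p).map (· - 1)).foldr max 0)).length = n - p := by
    rw [List.length_map, List.length_drop]
    omega
  have hdropD : ∀ j, j < n - p → (t.drop p).getD j 0 = t.getD (p+j) 0 := by
    intro j hj
    rw [List.getD_eq_getElem _ _ (by rw [List.length_drop]; omega), List.getElem_drop,
      List.getD_eq_getElem _ _ (by omega)]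
  have hBgetD : ∀ j, j < p → ((t.take p).map (· - 1)).getD j 0 = t.getD j 0 - 1 := by
    intro j hj
    rw [getD_map (by rw [List.length_take]; omega), getD_take hj (by omega)]
  have hSgetD : ∀ j, j < n - p →
      ((t.drop p).map (fun y => if y = 1 then 1 else y - ((t.take p).map (· - 1)).foldr max 0)).getD j 0
        = (if t.getD (p+j) 0 = 1 then 1 else t.getD (p+j) 0 - (T-1)) := by
    intro j hj
    rw [getD_map (by rw [List.length_drop]; omega), hdropD j hj, hm]
  -- RGS of the beta component
  have hrgsB : IsRGS ((t.take p).map (· - 1)) := by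
    refine ⟨?_, ?_, ?_⟩
    · rcases Nat.eq_zero_or_pos p with hp0 | hp1
      · rw [hp0]; simp
      · have h0 : (0:ℕ) < ((t.take p).map (· - 1)).length := by omega
        rw [List.getD_eq_getElem _ _ h0, List.getElem_map, List.getElem_take]
        have hb := hrgs.2.2 0 (by simp; omega)
        rw [hl_getD 0, htake 0 (by omega)] at hb
        simp only [List.take_zero, List.foldr_nil] at hb
        have h2 := hβval 0 hp1
        rw [List.getD_eq_getElem _ _ (show 0 < t.length by omega)] at h2 hb
        omega
    · intro x hx
      rw [List.mem_map] at hx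
      obtain ⟨y, hy, rfl⟩ := hx
      obtain ⟨j, hj1, hj2, hj3⟩ := mem_take_pos hy
      have := hβval j hj1
      omega
    · intro i hi
      rw [hlB] at hi
      have hb := hrgs.2.2 (i+1) (by simp; omega)
      rw [hl_getD (i+1), htake (i+1) (by omega)] at hb
      rw [hBgetD (i+1) (by omega)]
      have e1 : ((t.take p).map (· - 1)).take (i+1) = (t.take (i+1)).map (· - 1) := by
        rw [← List.map_take, List.take_take, min_eq_left (by omega)]
      rw [e1, foldrMax_map_sub1]
      have h2 := hβval 0 (by omega)
      have h3 : t.getD 0 0 ≤ (t.take (i+1)).foldr max 0 :=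
        le_foldrMax (getD_mem_take (by omega) (by omega))
      omega
  -- RGS of the sigma component
  have hrgsS : IsRGS ((t.drop p).map (fun y => if y = 1 then 1 else y - ((t.take p).map (· - 1)).foldr max 0)) := by
    refine ⟨?_, ?_, ?_⟩
    · rcases Nat.eq_zero_or_pos (n - p) with hp0 | hp1
      · have hl0 : ((t.drop p).map (fun y => if y = 1 then 1 else y - ((t.take p).map (· - 1)).foldr max 0)).length = 0 := by omega
        rw [List.length_eq_zero_iff] at hl0
        rw [hl0]; simp
      · rw [getD_one_zero (by rw [hlS]; omega), hSgetD 0 (by omega),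
          show p + 0 = p from rfl, hσ0 (by omega)]
        simp
    · intro x hx
      rw [List.mem_map] at hx
      obtain ⟨y, hy, rfl⟩ := hx
      rw [List.mem_iff_getElem] at hy
      obtain ⟨j, hjlen, rfl⟩ := hy
      rw [List.length_drop] at hjlen
      rw [List.getElem_drop]
      rw [show t[p+j] = t.getD (p+j) 0 from (List.getD_eq_getElem _ _ (by omega)).symm]
      rcases hσval (p+j) (by omega) (by omega) with h1 | h1
      · rw [h1]; simp
      · rw [hm]
        have : ¬ (t.getD (p+j) 0 = 1) := by omega
        rw [if_neg this]
        omega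
    · intro i hi
      rw [hlS] at hi
      have hb := hrgs.2.2 (p+i+1) (by simp; omega)
      rw [hl_getD (p+i+1), htake (p+i+1) (by omega)] at hb
      rw [show p + i + 1 = p + (i+1) from by omega, List.take_add, foldrMax_append] at hb
      set S := ((t.drop p).take (i+1)).foldr max 0 with hS
      rw [hSgetD (i+1) (by omega)]
      have hS'1 : 1 ≤ (((t.drop p).map (fun y => if y = 1 then 1 else y - ((t.take p).map (· - 1)).foldr max 0)).take (i+1)).foldr max 0 := by
        have hmm : (((t.drop p).map (fun y => if y = 1 then 1 else y - ((t.take p).map (· - 1)).foldr max 0))).getD 0 0 ∈ (((t.drop p).map (fun y => if y = 1 then 1 else y - ((t.take p).map (· - 1)).foldr max 0))).take (i+1) := by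
          apply getD_mem_take (by omega) (by rw [hlS]; omega)
        have := le_foldrMax hmm
        rw [hSgetD 0 (by omega), show p + 0 = p from rfl, hσ0 (by omega)] at this
        simpa using this
      by_cases hx1 : t.getD (p+(i+1)) 0 = 1
      · rw [if_pos hx1]
        omega
      · rw [if_neg hx1]
        rcases hσval (p+(i+1)) (by omega) (by omega) with h1 | h1
        · omega
        · by_cases hScase : S ≤ max T 1
          · omega
          · -- S is attained by a sigma letter
            have hSne : S ≠ 0 := by omega
            rcases foldrMax_mem (l := (t.drop p).take (i+1)) with h0 | hmem
            · omega
            · have hrSmem := List.mem_map_of_mem (f := fun y => if y = 1 then 1 else y - ((t.take p).map (· - 1)).foldr max 0) hmem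
              rw [List.map_take] at hrSmem
              have hle := le_foldrMax hrSmem
              rw [← hS] at hle
              have hS1 : ¬ (S = 1) := by omega
              simp only [hm] at hle hS'1 ⊢
              rw [if_neg hS1] at hle
              omega
  -- noncrossing and the structure identity
  have hid : (1 :: t) = psi ((t.take p).map (· - 1))
      ((t.drop p).map (fun y => if y = 1 then 1 else y - ((t.take p).map (· - 1)).foldr max 0)) := by
    rw [psi]
    congr 1
    rw [List.map_map]
    have e1 : (t.take p).map ((· + 1) ∘ (· - 1)) = t.take p := by
      have : ∀ x ∈ t.take p, ((· + 1) ∘ (· - 1)) x = id x := by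
        intro x hx
        obtain ⟨j, hj1, hj2, hj3⟩ := mem_take_pos hx
        have := hβval j hj1
        simp only [Function.comp_apply, id_eq]
        omega
      rw [List.map_congr_left this, List.map_id]
    rw [e1, List.map_map]
    have e2 : (t.drop p).map ((emb (((t.take p).map (· - 1)).foldr max 0)) ∘ (fun y => if y = 1 then 1 else y - ((t.take p).map (· - 1)).foldr max 0)) = t.drop p := by
      have : ∀ x ∈ t.drop p, ((emb (((t.take p).map (· - 1)).foldr max 0)) ∘ (fun y => if y = 1 then 1 else y - ((t.take p).map (· - 1)).foldr max 0)) x = id x := by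
        intro x hx
        rw [List.mem_iff_getElem] at hx
        obtain ⟨j, hjlen, rfl⟩ := hx
        rw [List.length_drop] at hjlen
        rw [List.getElem_drop]
        rw [show t[p+j] = t.getD (p+j) 0 from (List.getD_eq_getElem _ _ (by omega)).symm]
        simp only [Function.comp_apply, id_eq, hm, emb]
        rcases hσval (p+j) (by omega) (by omega) with h1 | h1
        · rw [h1]; simp
        · have hne1 : ¬ (t.getD (p+j) 0 = 1) := by omega
          rw [if_neg hne1]
          have hne2 : ¬ (t.getD (p+j) 0 - (T-1) = 1) := by omega
          rw [if_neg hne2]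
          omega
      rw [List.map_congr_left this, List.map_id]
    rw [e2, List.take_append_drop]
  refine ⟨⟨hlB, hrgsB, ?_⟩, ⟨hlS, hrgsS, ?_⟩, hp_le, hid⟩
  · intro hc
    exact hncr (hid ▸ psi_crossing_beta hc)
  · intro hc
    exact hncr (hid ▸ psi_crossing_sigma hrgsS.2.1 hc)

lemma nil_NC : NCseq 0 [] := by
  refine ⟨rfl, ⟨rfl, by simp, by simp⟩, ?_⟩
  rintro ⟨i, j, k, m, h1, h2, h3, h4, -⟩
  simp at h4

lemma psi_NC {a c : ℕ} {β σ : List ℕ} (hβ : NCseq a β) (hσ : NCseq c σ) :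
    NCseq (a + c + 1) (psi β σ) := by
  refine ⟨by rw [psi_length, hβ.1, hσ.1], psi_isRGS hβ.2.1 hσ.2.1, fun hc => ?_⟩
  rcases psi_crossing_rev hβ.2.1 hσ.2.1 hc with h | h
  · exact hβ.2.2 h
  · exact hσ.2.2 h

lemma phi_psi {β σ : List ℕ} (hβ : IsRGS β) (hσ : IsRGS σ) :
    phiP (psi β σ) = β.length ∧ phiB (psi β σ) = β ∧ phiS (psi β σ) = σ := by
  have hβ1 := hβ.2.1
  have hσ1 := hσ.2.1
  have htail : (psi β σ).tail = β.map (· + 1) ++ σ.map (emb (β.foldr max 0)) := rfl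
  have hfu : (β.map (· + 1)).findIdx (fun y => y == 1) = (β.map (· + 1)).length := by
    rw [List.findIdx_eq_length]
    intro x hx
    rw [List.mem_map] at hx
    obtain ⟨y, hy, rfl⟩ := hx
    have := hβ1 y hy
    simp only [beq_eq_false_iff_ne, ne_eq]
    omega
  have hP : phiP (psi β σ) = β.length := by
    rw [phiP, htail, List.findIdx_append, hfu]
    simp only [lt_self_iff_false, if_false]
    cases σ with
    | nil => simp
    | cons s0 srest =>
      have hs0 : s0 = 1 := hσ.1
      have h0 : (0:ℕ) < ((s0 :: srest).map (emb (β.foldr max 0))).length := by simp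
      have he0 : ((s0 :: srest).map (emb (β.foldr max 0))).findIdx (fun y => y == 1) = 0 := by
        rw [List.findIdx_eq (p := fun y => y == 1) h0]
        constructor
        · subst hs0
          simp [emb]
        · intro j hj
          exact absurd hj (by omega)
      rw [he0]
      simp
  have hB : phiB (psi β σ) = β := by
    rw [phiB, hP, htail]
    rw [show β.length = (β.map (· + 1)).length from by simp, List.take_left, List.map_map]
    have : ∀ x ∈ β, ((· - 1) ∘ (· + 1)) x = id x := by
      intro x hx
      simp
    rw [List.map_congr_left this, List.map_id]
  refine ⟨hP, hB, ?_⟩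
  rw [phiS, hP, hB, htail]
  rw [show β.length = (β.map (· + 1)).length from by simp, List.drop_left, List.map_map]
  have : ∀ x ∈ σ, ((fun y => if y = 1 then 1 else y - β.foldr max 0) ∘ (emb (β.foldr max 0))) x = id x := by
    intro x hx
    have h1 := hσ1 x hx
    simp only [Function.comp_apply, emb, id_eq]
    split_ifs <;> omega
  rw [List.map_congr_left this, List.map_id]

noncomputable def g (n : ℕ) : Polynomial ℚ :=
  ∑ l ∈ ncFinset n, (Polynomial.X : Polynomial ℚ) ^ (occCount [1,2,2] l)

noncomputable def hh (a : ℕ) : Polynomial ℚ :=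
  ∑ β ∈ (ncFinset a).filter eB, (Polynomial.X : Polynomial ℚ) ^ (occCount [1,2,2] β)

lemma ncFinset_zero : ncFinset 0 = {[]} := by
  ext l
  rw [mem_ncFinset, Finset.mem_singleton]
  constructor
  · intro h
    exact List.length_eq_zero_iff.1 h.1
  · rintro rfl
    exact nil_NC

lemma occ_nil : occCount [1,2,2] [] = 0 := by rw [occCount_eq]; simp

lemma eB_nil : ¬ eB [] := fun h => by simp [eB] at h

lemma g_zero : g 0 = 1 := by rw [g, ncFinset_zero]; simp [occ_nil]

lemma hh_zero : hh 0 = 0 := by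
  rw [hh, ncFinset_zero]
  have he : ({[]} : Finset (List ℕ)).filter eB = ∅ := by
    rw [Finset.filter_eq_empty_iff]
    intro l hl
    rw [Finset.mem_singleton] at hl
    subst hl
    exact eB_nil
  rw [he]
  simp

lemma g_succ (n : ℕ) : g (n+1)
    = ∑ x ∈ (Finset.HasAntidiagonal.antidiagonal n).sigma (fun p => ncFinset p.1 ×ˢ ncFinset p.2),
        (Polynomial.X : Polynomial ℚ) ^
          (occCount [1,2,2] x.2.1 + occCount [1,2,2] x.2.2 + (if eB x.2.1 then 1 else 0)) := by
  rw [g]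
  refine Finset.sum_bij'
    (fun l _ => (⟨(phiP l, n - phiP l), (phiB l, phiS l)⟩ : Σ _ : ℕ × ℕ, List ℕ × List ℕ))
    (fun x _ => psi x.2.1 x.2.2) ?_ ?_ ?_ ?_ ?_
  · intro l hl
    rw [mem_ncFinset] at hl
    obtain ⟨h1, h2, h3, h4⟩ := decomp hl
    rw [Finset.mem_sigma, Finset.HasAntidiagonal.mem_antidiagonal, Finset.mem_product]
    exact ⟨by simp; omega, mem_ncFinset.2 h1, mem_ncFinset.2 h2⟩
  · intro x hx
    rw [Finset.mem_sigma, Finset.HasAntidiagonal.mem_antidiagonal, Finset.mem_product] at hx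
    obtain ⟨hab, h1, h2⟩ := hx
    rw [mem_ncFinset] at h1 h2 ⊢
    have := psi_NC h1 h2
    rwa [show x.1.1 + x.1.2 + 1 = n + 1 from by omega] at this
  · intro l hl
    rw [mem_ncFinset] at hl
    exact (decomp hl).2.2.2.symm
  · intro x hx
    rw [Finset.mem_sigma, Finset.HasAntidiagonal.mem_antidiagonal, Finset.mem_product] at hx
    obtain ⟨hab, h1, h2⟩ := hx
    rw [mem_ncFinset] at h1 h2
    obtain ⟨hP, hB, hS⟩ := phi_psi h1.2.1 h2.2.1
    rcases x with ⟨⟨a, c⟩, β, σ⟩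
    simp only at hP hB hS ⊢
    simp only [Finset.HasAntidiagonal.mem_antidiagonal] at hab
    have ha : β.length = a := h1.1
    simp only [hP, hB, hS, ha]
    rw [show n - a = c from by omega]
  · intro l hl
    rw [mem_ncFinset] at hl
    obtain ⟨h1, h2, h3, h4⟩ := decomp hl
    conv_lhs => rw [h4]
    rw [occCount_psi h1.2.1 h2.2.1]

lemma g_rec (n : ℕ) :
    g (n+1) = ∑ p ∈ Finset.HasAntidiagonal.antidiagonal n,
      (g p.1 + (Polynomial.X - 1) * hh p.1) * g p.2 := by
  rw [g_succ, Finset.sum_sigma]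
  apply Finset.sum_congr rfl
  intro p _
  rw [Finset.sum_product]
  have step1 : ∀ β ∈ ncFinset p.1,
      (∑ σ ∈ ncFinset p.2, (Polynomial.X : Polynomial ℚ) ^
        (occCount [1,2,2] β + occCount [1,2,2] σ + (if eB β then 1 else 0)))
      = (Polynomial.X : Polynomial ℚ) ^ (occCount [1,2,2] β + (if eB β then 1 else 0)) * g p.2 := by
    intro β _
    rw [g, Finset.mul_sum]
    apply Finset.sum_congr rfl
    intro σ _
    rw [← pow_add]
    congr 1
    omega
  rw [Finset.sum_congr rfl step1, ← Finset.sum_mul]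
  congr 1
  rw [g, hh]
  rw [← Finset.sum_filter_add_sum_filter_not (ncFinset p.1) eB
    (fun β => (Polynomial.X : Polynomial ℚ) ^ (occCount [1,2,2] β + (if eB β then 1 else 0)))]
  rw [← Finset.sum_filter_add_sum_filter_not (ncFinset p.1) eB
    (fun β => (Polynomial.X : Polynomial ℚ) ^ (occCount [1,2,2] β))]
  have e1 : ∑ β ∈ (ncFinset p.1).filter eB,
      (Polynomial.X : Polynomial ℚ) ^ (occCount [1,2,2] β + (if eB β then 1 else 0))
      = (∑ β ∈ (ncFinset p.1).filter eB, (Polynomial.X : Polynomial ℚ) ^ (occCount [1,2,2] β)) * Polynomial.X := by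
    rw [Finset.sum_mul]
    apply Finset.sum_congr rfl
    intro β hβ
    rw [Finset.mem_filter] at hβ
    rw [if_pos hβ.2, pow_add, pow_one]
  have e2 : ∑ β ∈ (ncFinset p.1).filter (fun β => ¬ eB β),
      (Polynomial.X : Polynomial ℚ) ^ (occCount [1,2,2] β + (if eB β then 1 else 0))
      = ∑ β ∈ (ncFinset p.1).filter (fun β => ¬ eB β), (Polynomial.X : Polynomial ℚ) ^ (occCount [1,2,2] β) := by
    apply Finset.sum_congr rfl
    intro β hβ
    rw [Finset.mem_filter] at hβ
    rw [if_neg hβ.2]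
    congr 1
  rw [e1, e2]
  ring

lemma phiP_zero {n : ℕ} {β : List ℕ} (hNC : NCseq (n+1) β) (heB : eB β) : phiP β = 0 := by
  have hlen2 : 2 ≤ β.length := heB.1
  have htlen : 0 < β.tail.length := by rw [List.length_tail]; omega
  rw [phiP, List.findIdx_eq (i := 0) htlen]
  refine ⟨?_, fun j hj => absurd hj (by omega)⟩
  have h0 : β.getD 0 0 = 1 := by
    rw [← getD_one_zero (by omega)]
    exact hNC.2.1.1
  have hβ1 : β.getD 1 0 = 1 := by have := heB.2; omega
  rw [List.getD_eq_getElem _ _ (by omega : 1 < β.length)] at hβ1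
  simp [List.getElem_tail, hβ1]

lemma phiB_nil {n : ℕ} {β : List ℕ} (hNC : NCseq (n+1) β) (heB : eB β) : phiB β = [] := by
  rw [phiB, phiP_zero hNC heB]
  simp

lemma hh_succ (a : ℕ) : hh (a+1) = g a - (if a = 0 then 1 else 0) := by
  have key : hh (a+1)
      = ∑ γ ∈ (ncFinset a).filter (fun γ => ¬ γ = []),
          (Polynomial.X : Polynomial ℚ) ^ (occCount [1,2,2] γ) := by
    rw [hh]
    refine Finset.sum_bij' (fun β _ => phiS β) (fun γ _ => psi [] γ) ?_ ?_ ?_ ?_ ?_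
    · intro β hβ
      rw [Finset.mem_filter, mem_ncFinset] at hβ
      obtain ⟨hNC, heB⟩ := hβ
      obtain ⟨h1, h2, h3, h4⟩ := decomp hNC
      rw [phiP_zero hNC heB] at h2
      rw [Finset.mem_filter, mem_ncFinset]
      refine ⟨by simpa using h2, ?_⟩
      intro hnil
      have hl := h2.1
      rw [hnil] at hl
      simp at hl
      have := heB.1
      have := hNC.1
      omega
    · intro γ hγ
      rw [Finset.mem_filter, mem_ncFinset] at hγ
      obtain ⟨hNC, hne⟩ := hγ
      rw [Finset.mem_filter, mem_ncFinset]
      have hpsi := psi_NC nil_NC hNC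
      constructor
      · rwa [show 0 + a + 1 = a + 1 from by omega] at hpsi
      · have hγlen : 0 < γ.length := by
          rcases Nat.eq_zero_or_pos γ.length with h0 | h1
          · exact absurd (List.length_eq_zero_iff.1 h0) hne
          · exact h1
        have hγ0 : γ.getD 0 0 = 1 := by
          rw [← getD_one_zero hγlen]
          exact hNC.2.1.1
        refine ⟨by rw [psi_length]; simp; omega, ?_⟩
        have h1 := psi_getD_sigma [] (show 0 < γ.length from hγlen)
        simp only [List.length_nil, List.foldr_nil] at h1
        rw [show (0:ℕ) + 1 + 0 = 1 from rfl] at h1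
        rw [h1, hγ0, psi_getD_zero]
        simp [emb]
    · intro β hβ
      rw [Finset.mem_filter, mem_ncFinset] at hβ
      obtain ⟨hNC, heB⟩ := hβ
      obtain ⟨h1, h2, h3, h4⟩ := decomp hNC
      show psi [] (phiS β) = β
      conv_rhs => rw [h4, phiB_nil hNC heB]
    · intro γ hγ
      rw [Finset.mem_filter, mem_ncFinset] at hγ
      exact (phi_psi nil_NC.2.1 hγ.1.2.1).2.2
    · intro β hβ
      rw [Finset.mem_filter, mem_ncFinset] at hβ
      obtain ⟨hNC, heB⟩ := hβ
      obtain ⟨h1, h2, h3, h4⟩ := decomp hNC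
      show (Polynomial.X : Polynomial ℚ) ^ (occCount [1,2,2] β)
        = (Polynomial.X : Polynomial ℚ) ^ (occCount [1,2,2] (phiS β))
      conv_lhs => rw [h4, phiB_nil hNC heB]
      rw [occCount_psi nil_NC.2.1 h2.2.1, occ_nil]
      simp [eB_nil]
  rw [key]
  have hsplit := Finset.sum_filter_add_sum_filter_not (ncFinset a) (fun γ => γ = [])
    (fun γ => (Polynomial.X : Polynomial ℚ) ^ (occCount [1,2,2] γ))
  have hnil : ∑ γ ∈ (ncFinset a).filter (fun γ => γ = []),
      (Polynomial.X : Polynomial ℚ) ^ (occCount [1,2,2] γ) = (if a = 0 then 1 else 0) := by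
    rcases Nat.eq_zero_or_pos a with rfl | ha
    · rw [ncFinset_zero]
      rw [show ({[]} : Finset (List ℕ)).filter (fun γ => γ = []) = {[]} from by
        ext x; simp]
      simp [occ_nil]
    · rw [show (ncFinset a).filter (fun γ => γ = []) = ∅ from by
        rw [Finset.filter_eq_empty_iff]
        rintro l hl rfl
        rw [mem_ncFinset] at hl
        have := hl.1
        simp at this
        omega]
      simp [if_neg (by omega : ¬ a = 0)]
  rw [g, ← hsplit, hnil]
  ring

lemma F122_coeff (n : ℕ) : PowerSeries.coeff n F122 = g n := by
  rw [F122, PowerSeries.coeff_mk]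
  have hcard : ∀ k : ℕ, (Nat.card {l : List ℕ // NCseq n l ∧ occCount [1,2,2] l = k})
      = ((ncFinset n).filter (fun l => occCount [1,2,2] l = k)).card := by
    intro k
    have e : ∀ l : List ℕ, (NCseq n l ∧ occCount [1,2,2] l = k)
        ↔ l ∈ (ncFinset n).filter (fun l => occCount [1,2,2] l = k) := by
      intro l
      rw [Finset.mem_filter, mem_ncFinset]
    rw [Nat.card_congr (Equiv.subtypeEquivRight e), Nat.card_eq_finsetCard]
  have hmap : ∀ l ∈ ncFinset n, occCount [1,2,2] l ∈ Finset.range (n+1) := by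
    intro l hl
    rw [mem_ncFinset] at hl
    rw [Finset.mem_range]
    have h1 := occCount_le l
    have h2 := hl.1
    omega
  rw [g, ← Finset.sum_fiberwise_of_maps_to hmap
    (fun l => (Polynomial.X : Polynomial ℚ) ^ (occCount [1,2,2] l))]
  apply Finset.sum_congr rfl
  intro k _
  rw [hcard k]
  have e2 : ∀ l ∈ (ncFinset n).filter (fun l => occCount [1,2,2] l = k),
      (Polynomial.X : Polynomial ℚ) ^ (occCount [1,2,2] l) = (Polynomial.X : Polynomial ℚ) ^ k := by
    intro l hl
    rw [Finset.mem_filter] at hl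
    rw [hl.2]
  rw [Finset.sum_congr rfl e2, Finset.sum_const]

lemma F122_eq : F122 = PowerSeries.mk (fun n => g n) :=
  PowerSeries.ext fun n => by rw [F122_coeff, PowerSeries.coeff_mk]

lemma g_one : g 1 = 1 := by
  have h := g_rec 0
  rw [Finset.Nat.antidiagonal_zero, Finset.sum_singleton] at h
  rw [show (0:ℕ) + 1 = 1 from rfl] at h
  rw [h, hh_zero, g_zero]
  ring

lemma hh_conv (k : ℕ) :
    ∑ p ∈ Finset.HasAntidiagonal.antidiagonal (k+1), hh p.1 * g p.2
      = (∑ p ∈ Finset.HasAntidiagonal.antidiagonal k, g p.1 * g p.2) - g k := by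
  rw [Finset.Nat.sum_antidiagonal_eq_sum_range_succ (fun a c => hh a * g c),
    Finset.Nat.sum_antidiagonal_eq_sum_range_succ (fun a c => g a * g c)]
  rw [Finset.sum_range_succ' (fun a => hh a * g (k + 1 - a)) (k+1)]
  rw [hh_zero]
  have e1 : ∀ a ∈ Finset.range (k+1), hh (a+1) * g (k+1-(a+1))
      = g a * g (k - a) - (if a = 0 then 1 else 0) * g (k - a) := by
    intro a ha
    rw [hh_succ, show k + 1 - (a+1) = k - a from by omega]
    ring
  rw [Finset.sum_congr rfl e1]
  rw [Finset.sum_sub_distrib]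
  have e2 : ∑ a ∈ Finset.range (k+1), (if a = 0 then 1 else 0) * g (k - a) = g k := by
    rw [Finset.sum_eq_single 0]
    · simp
    · intro b _ hb
      rw [if_neg hb, zero_mul]
    · intro h
      exact absurd (Finset.mem_range.2 (by omega)) h
  rw [e2]
  ring

lemma E122 : F122 = 1 + PowerSeries.X * F122^2
    + (PowerSeries.C Polynomial.X - 1) * (PowerSeries.X^2 * F122^2)
    - (PowerSeries.C Polynomial.X - 1) * (PowerSeries.X^2 * F122) := by
  have hC : (PowerSeries.C (R := Polynomial ℚ)) Polynomial.X - 1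
      = (PowerSeries.C (R := Polynomial ℚ)) (Polynomial.X - 1) := by
    rw [map_sub, map_one]
  rw [hC, F122_eq]
  apply PowerSeries.ext
  intro n
  rw [map_sub, map_add, map_add, PowerSeries.coeff_one, PowerSeries.coeff_C_mul,
    PowerSeries.coeff_C_mul, PowerSeries.coeff_mk]
  have hsq : ∀ m : ℕ, PowerSeries.coeff m ((PowerSeries.mk g)^2)
      = ∑ p ∈ Finset.HasAntidiagonal.antidiagonal m, g p.1 * g p.2 := by
    intro m
    rw [pow_two, PowerSeries.coeff_mul]
    simp [PowerSeries.coeff_mk]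
  match n with
  | 0 =>
    rw [g_zero]
    simp
  | 1 =>
    rw [g_one]
    rw [PowerSeries.coeff_succ_X_mul, hsq, PowerSeries.coeff_X_pow_mul',
      PowerSeries.coeff_X_pow_mul']
    norm_num
    rw [g_zero]
    norm_num
  | (k+2) =>
    rw [PowerSeries.coeff_succ_X_mul, hsq,
      show k + 2 = k + 2 from rfl,
      PowerSeries.coeff_X_pow_mul, PowerSeries.coeff_X_pow_mul, hsq, PowerSeries.coeff_mk]
    rw [if_neg (by omega : ¬ (k + 2 = 0))]
    rw [g_rec (k+1)]
    have e1 : ∀ p ∈ Finset.HasAntidiagonal.antidiagonal (k+1),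
        (g p.1 + (Polynomial.X - 1) * hh p.1) * g p.2
          = g p.1 * g p.2 + (Polynomial.X - 1) * (hh p.1 * g p.2) := by
      intro p _
      ring
    rw [Finset.sum_congr rfl e1, Finset.sum_add_distrib, ← Finset.mul_sum, hh_conv]
    ring

end NC19

/-- F satisfies x(1+(q−1)x)F² = (1+(q−1)x²)F − 1 as formal power series. -/
theorem stmt19 :
    letI X : PowerSeries (Polynomial ℚ) := PowerSeries.X
    letI q : PowerSeries (Polynomial ℚ) := PowerSeries.C Polynomial.X
    X * (1 + (q - 1) * X) * F122 ^ 2 = (1 + (q - 1) * X ^ 2) * F122 - 1 := by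
  have hE := NC19.E122
  show PowerSeries.X * (1 + (PowerSeries.C Polynomial.X - 1) * PowerSeries.X) * F122 ^ 2
    = (1 + (PowerSeries.C Polynomial.X - 1) * PowerSeries.X ^ 2) * F122 - 1
  linear_combination -hE
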